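/- Let a > 0, q* > 0, 0 < ν < 1, 0 < α₀ < ξ, and define u : [α₀, ξ] → ℝ by u(η) = (q*·α₀^ν/2)·exp(α₀²/a)·a^{(1−ν)/2}·[γ((1−ν)/2, ξ²/a) − γ((1−ν)/2, η²/a)], where γ(s,x) = ∫₀ˣ t^{s−1} e^{−t} dt is the lower incomplete gamma function. Then: (i) u(ξ) = 0; (ii) u is differentiable on [α₀, ξ] with u'(η) = −q*·α₀^ν·η^{−ν}·exp(−(η² − α₀²)/a), so in particular u'(α₀) = −q*; (iii) u satisfies the ordinary differential equation (η^ν·u'(η))' + (2/a)·η^{ν+1}·u'(η) = 0 for all η ∈ (α₀, ξ). -/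

import Mathlib

open Real MeasureTheory Set

/-- Lower incomplete gamma function `γ(s,x) = ∫₀ˣ t^{s−1} e^{−t} dt`. -/
noncomputable def lowerGamma (s x : ℝ) : ℝ :=
  ∫ t in (0 : ℝ)..x, t ^ (s - 1) * Real.exp (-t)

lemma lowerGamma_hasDerivAt {s x : ℝ} (hs : 0 < s) (hx : 0 < x) :
    HasDerivAt (lowerGamma s) (x ^ (s - 1) * Real.exp (-x)) x := by
  have hint : IntervalIntegrable (fun t => t ^ (s - 1) * Real.exp (-t)) volume 0 x :=
    (intervalIntegral.intervalIntegrable_rpow' (by linarith)).mul_continuousOn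
      (Real.continuous_exp.comp continuous_neg).continuousOn
  have hco : ContinuousOn (fun t : ℝ => t ^ (s - 1) * Real.exp (-t)) (Ioi 0) :=
    (continuousOn_id.rpow_const (fun t ht => Or.inl (ne_of_gt ht))).mul
      (Real.continuous_exp.comp continuous_neg).continuousOn
  have hmeas : StronglyMeasurableAtFilter (fun t => t ^ (s - 1) * Real.exp (-t)) (nhds x) :=
    ⟨Ioi 0, Ioi_mem_nhds hx, (hco.aestronglyMeasurable measurableSet_Ioi)⟩
  have hcont : ContinuousAt (fun t => t ^ (s - 1) * Real.exp (-t)) x :=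
    ((Real.continuousAt_rpow_const x _ (Or.inl hx.ne')).mul
      (Real.continuous_exp.comp continuous_neg).continuousAt)
  exact intervalIntegral.integral_hasDerivAt_right hint hmeas hcont

theorem stmt_14 (a q ν α₀ ξ : ℝ)
    (ha : 0 < a) (hq : 0 < q) (hν0 : 0 < ν) (hν1 : ν < 1)
    (hα₀ : 0 < α₀) (hαξ : α₀ < ξ)
    (u : ℝ → ℝ)
    (hu : ∀ η : ℝ, u η =
      (q * α₀ ^ ν / 2) * Real.exp (α₀ ^ 2 / a) * a ^ ((1 - ν) / 2) *
        (lowerGamma ((1 - ν) / 2) (ξ ^ 2 / a) -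
          lowerGamma ((1 - ν) / 2) (η ^ 2 / a))) :
    -- (i)
    u ξ = 0 ∧
    -- (ii)
    (∀ η ∈ Icc α₀ ξ,
      HasDerivAt u
        (-q * α₀ ^ ν * η ^ (-ν) * Real.exp (-(η ^ 2 - α₀ ^ 2) / a)) η) ∧
    HasDerivAt u (-q) α₀ ∧
    -- (iii)
    (∀ η ∈ Ioo α₀ ξ,
      HasDerivAt
        (fun t : ℝ => t ^ ν *
          (-q * α₀ ^ ν * t ^ (-ν) * Real.exp (-(t ^ 2 - α₀ ^ 2) / a)))
        (-(2 / a) * η ^ (ν + 1) *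
          (-q * α₀ ^ ν * η ^ (-ν) * Real.exp (-(η ^ 2 - α₀ ^ 2) / a))) η) := by
  have hs : (0:ℝ) < (1 - ν) / 2 := by linarith
  have hderiv : ∀ η : ℝ, 0 < η →
      HasDerivAt u (-q * α₀ ^ ν * η ^ (-ν) * Real.exp (-(η ^ 2 - α₀ ^ 2) / a)) η := by
    intro η hη
    have hx : (0:ℝ) < η ^ 2 / a := by positivity
    have hGd := lowerGamma_hasDerivAt hs hx
    have hinner : HasDerivAt (fun t : ℝ => t ^ 2 / a) (2 * η / a) η := by
      have := (hasDerivAt_pow 2 η).div_const a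
      simpa [mul_comm] using this
    have hcomp := hGd.comp η hinner
    have hueq : u = fun t =>
        (q * α₀ ^ ν / 2) * Real.exp (α₀ ^ 2 / a) * a ^ ((1 - ν) / 2) *
          (lowerGamma ((1 - ν) / 2) (ξ ^ 2 / a) -
            lowerGamma ((1 - ν) / 2) (t ^ 2 / a)) := funext hu
    rw [hueq]
    have hd := ((hcomp.const_sub (lowerGamma ((1 - ν) / 2) (ξ ^ 2 / a))).const_mul
      ((q * α₀ ^ ν / 2) * Real.exp (α₀ ^ 2 / a) * a ^ ((1 - ν) / 2)))
    refine hd.congr_deriv (Eq.symm ?_)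
    -- value identity
    have h2 : ((η ^ 2 / a : ℝ)) ^ ((1 - ν) / 2 - 1) = η ^ (-ν - 1) / a ^ ((1 - ν) / 2 - 1) := by
      rw [Real.div_rpow (by positivity) ha.le]
      congr 1
      rw [← Real.rpow_natCast η 2, ← Real.rpow_mul hη.le]
      congr 1
      push_cast; ring
    have h5 : η ^ (-ν - 1) = η ^ (-ν) / η := by
      rw [Real.rpow_sub hη, Real.rpow_one]
    have h4 : a ^ ((1 - ν) / 2) = a ^ ((1 - ν) / 2 - 1) * a := by
      rw [← Real.rpow_add_one ha.ne']; ring_nf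
    have h3 : Real.exp (α₀ ^ 2 / a) * Real.exp (-(η ^ 2 / a)) =
        Real.exp (-(η ^ 2 - α₀ ^ 2) / a) := by
      rw [← Real.exp_add]; congr 1; ring
    rw [h2, h5, h4, ← h3]
    have hane : a ^ ((1 - ν) / 2 - 1) ≠ 0 := (Real.rpow_pos_of_pos ha _).ne'
    field_simp
  refine ⟨by simp [hu ξ], fun η hη => hderiv η (lt_of_lt_of_le hα₀ hη.1), ?_, ?_⟩
  · have := hderiv α₀ hα₀
    convert this using 1
    rw [Real.rpow_neg hα₀.le]
    have : α₀ ^ ν ≠ 0 := (Real.rpow_pos_of_pos hα₀ ν).ne'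
    field_simp
    simp
  · intro η hη
    have hηpos : 0 < η := lt_trans hα₀ hη.1
    have hg : HasDerivAt (fun t : ℝ => -q * α₀ ^ ν * Real.exp (-(t ^ 2 - α₀ ^ 2) / a))
        (-q * α₀ ^ ν * (Real.exp (-(η ^ 2 - α₀ ^ 2) / a) * (-(2 * η) / a))) η := by
      have hin : HasDerivAt (fun t : ℝ => -(t ^ 2 - α₀ ^ 2) / a) (-(2 * η) / a) η := by
        have := (((hasDerivAt_pow 2 η).sub_const (α₀ ^ 2)).neg).div_const a
        simpa [mul_comm] using this
      exact (hin.exp).const_mul (-q * α₀ ^ ν)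
    have hev : (fun t : ℝ => t ^ ν *
        (-q * α₀ ^ ν * t ^ (-ν) * Real.exp (-(t ^ 2 - α₀ ^ 2) / a))) =ᶠ[nhds η]
        (fun t : ℝ => -q * α₀ ^ ν * Real.exp (-(t ^ 2 - α₀ ^ 2) / a)) := by
      filter_upwards [Ioi_mem_nhds hηpos] with t ht
      rw [Real.rpow_neg (le_of_lt ht)]
      have : t ^ ν ≠ 0 := (Real.rpow_pos_of_pos ht ν).ne'
      field_simp
    have := hg.congr_of_eventuallyEq hev
    refine this.congr_deriv (Eq.symm ?_)
    have h6 : η ^ (ν + 1) = η ^ ν * η := by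
      rw [Real.rpow_add hηpos, Real.rpow_one]
    rw [h6, Real.rpow_neg hηpos.le]
    have : η ^ ν ≠ 0 := (Real.rpow_pos_of_pos hηpos ν).ne'
    field_simp
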